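/- Existence of universal vector colorings: let 0 ≤ δ < 1, β ∈ (0, 1−δ), and w_1,...,w_ℓ ∈ ℝ^n with ℓ = δn. Then there exist vectors u_1,...,u_n (in some Euclidean space) such that (i) ∑_i w_k(i)u_i = 0 for every k; (ii) for every b ∈ ℝ^n, ||∑_i b(i)u_i||_2^2 ≤ (1/β)∑_i b(i)^2||u_i||_2^2; (iii) ||u_i||_2 ≤ 1 for all i and ∑_i ||u_i||_2^2 ≥ (1 − δ − β)n. -/

import Mathlib

open scoped RealInnerProductSpace Topology
open Finset Matrix

namespace UVC

variable {n l : ℕ}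

def cx (w : Fin l → Fin n → ℝ) (x : Fin l → ℝ) (i : Fin n) : ℝ := ∑ k, x k * w k i

def qf (w : Fin l → Fin n → ℝ) (d : Fin n → ℝ) (x : Fin l → ℝ) : ℝ :=
  ∑ i, d i * (cx w x i)^2

noncomputable def zv (d : Fin n → ℝ) (i : Fin n) : EuclideanSpace ℝ (Fin n) :=
  EuclideanSpace.single i (Real.sqrt (d i))

noncomputable def yv (w : Fin l → Fin n → ℝ) (d : Fin n → ℝ) (k : Fin l) :
    EuclideanSpace ℝ (Fin n) := ∑ i, w k i • zv d i

noncomputable def Vsp (w : Fin l → Fin n → ℝ) (d : Fin n → ℝ) :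
    Submodule ℝ (EuclideanSpace ℝ (Fin n)) := Submodule.span ℝ (Set.range (yv w d))

noncomputable def pvL (w : Fin l → Fin n → ℝ) (d : Fin n → ℝ) :
    EuclideanSpace ℝ (Fin n) →L[ℝ] EuclideanSpace ℝ (Fin n) :=
  (Vsp w d).subtypeL.comp ((Vsp w d).orthogonalProjectionOnto)

lemma pvL_mem (w : Fin l → Fin n → ℝ) (d : Fin n → ℝ) (x : EuclideanSpace ℝ (Fin n)) :
    pvL w d x ∈ Vsp w d := SetLike.coe_mem _

lemma pvL_of_mem (w : Fin l → Fin n → ℝ) (d : Fin n → ℝ) {x : EuclideanSpace ℝ (Fin n)}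
    (hx : x ∈ Vsp w d) : pvL w d x = x := Submodule.starProjection_eq_self_iff.mpr hx

lemma inner_sub_pvL (w : Fin l → Fin n → ℝ) (d : Fin n → ℝ) (x v : EuclideanSpace ℝ (Fin n))
    (hv : v ∈ Vsp w d) : ⟪x - pvL w d x, v⟫ = 0 :=
  Submodule.starProjection_inner_eq_zero x v hv

noncomputable def lev (w : Fin l → Fin n → ℝ) (d : Fin n → ℝ) (i : Fin n) : ℝ :=
  ‖pvL w d (zv d i)‖^2

lemma inner_zv_zv (d : Fin n → ℝ) (hd : ∀ i, 0 ≤ d i) (i j : Fin n) :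
    ⟪zv d i, zv d j⟫ = if i = j then d i else 0 := by
  unfold zv
  rw [EuclideanSpace.inner_single_left]
  simp only [EuclideanSpace.single_apply, starRingEnd_apply, star_trivial]
  by_cases h : i = j
  · subst h; simp [Real.mul_self_sqrt (hd i)]
  · simp [h, Ne.symm h]

lemma inner_zv_yv (w : Fin l → Fin n → ℝ) (d : Fin n → ℝ) (hd : ∀ i, 0 ≤ d i)
    (i : Fin n) (k : Fin l) : ⟪zv d i, yv w d k⟫ = w k i * d i := by
  unfold yv
  rw [inner_sum]
  rw [Finset.sum_eq_single i]
  · rw [real_inner_smul_right, inner_zv_zv d hd]; simp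
  · intro j _ hji
    rw [real_inner_smul_right, inner_zv_zv d hd]
    simp [Ne.symm hji]
  · simp

lemma inner_zv_comb (w : Fin l → Fin n → ℝ) (d : Fin n → ℝ) (hd : ∀ i, 0 ≤ d i)
    (i : Fin n) (x : Fin l → ℝ) :
    ⟪zv d i, ∑ k, x k • yv w d k⟫ = d i * cx w x i := by
  rw [inner_sum]
  have h : ∀ k ∈ Finset.univ, ⟪zv d i, x k • yv w d k⟫ = d i * (x k * w k i) := by
    intro k _
    rw [real_inner_smul_right, inner_zv_yv w d hd]; ring
  rw [Finset.sum_congr rfl h, ← Finset.mul_sum]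
  rfl

lemma norm_comb_sq (w : Fin l → Fin n → ℝ) (d : Fin n → ℝ) (hd : ∀ i, 0 ≤ d i)
    (x : Fin l → ℝ) : ‖∑ k, x k • yv w d k‖^2 = qf w d x := by
  rw [← real_inner_self_eq_norm_sq]
  rw [sum_inner]
  have h1 : ∀ k ∈ Finset.univ, ⟪x k • yv w d k, ∑ k', x k' • yv w d k'⟫
      = ∑ i, x k * (w k i * (d i * cx w x i)) := by
    intro k _
    rw [real_inner_smul_left]
    have : ⟪yv w d k, ∑ k', x k' • yv w d k'⟫ = ∑ i, w k i * (d i * cx w x i) := by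
      have hy : yv w d k = ∑ i, w k i • zv d i := rfl
      rw [hy, sum_inner]
      refine Finset.sum_congr rfl fun i _ => ?_
      rw [real_inner_smul_left, inner_zv_comb w d hd]
    rw [this, Finset.mul_sum]
  rw [Finset.sum_congr rfl h1, Finset.sum_comm]
  refine Finset.sum_congr rfl fun i _ => ?_
  have : ∑ k, x k * (w k i * (d i * cx w x i)) = (∑ k, x k * w k i) * (d i * cx w x i) := by
    rw [Finset.sum_mul]
    exact Finset.sum_congr rfl fun k _ => by ring
  rw [this]
  show (cx w x i) * (d i * cx w x i) = d i * (cx w x i)^2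
  ring

lemma norm_zv_sq (d : Fin n → ℝ) (hd : ∀ i, 0 ≤ d i) (i : Fin n) :
    ‖zv d i‖^2 = d i := by
  rw [← real_inner_self_eq_norm_sq, inner_zv_zv d hd]; simp

/-- Pythagoras -/
lemma pyth (w : Fin l → Fin n → ℝ) (d : Fin n → ℝ) (x : EuclideanSpace ℝ (Fin n)) :
    ‖x‖^2 = ‖x - pvL w d x‖^2 + ‖pvL w d x‖^2 := by
  have h0 : ⟪x - pvL w d x, pvL w d x⟫ = 0 :=
    inner_sub_pvL w d x _ (pvL_mem w d x)
  have : x = (x - pvL w d x) + pvL w d x := by abel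
  calc ‖x‖^2 = ‖(x - pvL w d x) + pvL w d x‖^2 := by rw [← this]
    _ = ‖x - pvL w d x‖^2 + 2*⟪x - pvL w d x, pvL w d x⟫ + ‖pvL w d x‖^2 := norm_add_sq_real _ _
    _ = ‖x - pvL w d x‖^2 + ‖pvL w d x‖^2 := by rw [h0]; ring

lemma norm_sub_pvL_sq (w : Fin l → Fin n → ℝ) (d : Fin n → ℝ) (x : EuclideanSpace ℝ (Fin n)) :
    ‖x - pvL w d x‖^2 = ‖x‖^2 - ‖pvL w d x‖^2 := by
  have := pyth w d x; linarith

lemma norm_pvL_le (w : Fin l → Fin n → ℝ) (d : Fin n → ℝ) (x : EuclideanSpace ℝ (Fin n)) :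
    ‖pvL w d x‖^2 ≤ ‖x‖^2 := by
  have := pyth w d x
  nlinarith [sq_nonneg ‖x - pvL w d x‖]

/-- inner of z with the projection of z equals norm sq of projection -/
lemma inner_zv_pvL (w : Fin l → Fin n → ℝ) (d : Fin n → ℝ) (x : EuclideanSpace ℝ (Fin n)) :
    ⟪x, pvL w d x⟫ = ‖pvL w d x‖^2 := by
  have h0 : ⟪x - pvL w d x, pvL w d x⟫ = 0 :=
    inner_sub_pvL w d x _ (pvL_mem w d x)
  have : ⟪x, pvL w d x⟫ = ⟪x - pvL w d x, pvL w d x⟫ + ⟪pvL w d x, pvL w d x⟫ := by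
    rw [← inner_add_left]; norm_num
  rw [this, h0, real_inner_self_eq_norm_sq]; ring

/-- Cauchy-Schwarz through the projection: for `v ∈ V`, `⟪z,v⟫² ≤ lev ‖v‖²`. -/
lemma inner_sq_le_lev (w : Fin l → Fin n → ℝ) (d : Fin n → ℝ) (x v : EuclideanSpace ℝ (Fin n))
    (hv : v ∈ Vsp w d) : ⟪x, v⟫^2 ≤ ‖pvL w d x‖^2 * ‖v‖^2 := by
  have h1 : ⟪x, v⟫ = ⟪pvL w d x, v⟫ := by
    have h0 : ⟪x - pvL w d x, v⟫ = 0 := inner_sub_pvL w d x v hv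
    have : ⟪x, v⟫ = ⟪x - pvL w d x, v⟫ + ⟪pvL w d x, v⟫ := by
      rw [← inner_add_left]; norm_num
    rw [this, h0]; ring
  rw [h1]
  have := real_inner_mul_inner_self_le (pvL w d x) v
  rw [real_inner_self_eq_norm_sq, real_inner_self_eq_norm_sq] at this
  calc ⟪pvL w d x, v⟫^2 = ⟪pvL w d x, v⟫ * ⟪pvL w d x, v⟫ := sq ⟪pvL w d x, v⟫
    _ ≤ ‖pvL w d x‖^2 * ‖v‖^2 := this

noncomputable def lev1 (w : Fin l → Fin n → ℝ) (d : Fin n → ℝ) (i : Fin n) : ℝ :=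
  ‖pvL w d (EuclideanSpace.single i 1)‖^2

lemma zv_eq_smul (d : Fin n → ℝ) (i : Fin n) :
    zv d i = Real.sqrt (d i) • EuclideanSpace.single i (1:ℝ) := by
  unfold zv
  ext j
  simp [EuclideanSpace.single_apply, mul_ite]

lemma lev_eq (w : Fin l → Fin n → ℝ) (d : Fin n → ℝ) (hd : ∀ i, 0 ≤ d i) (i : Fin n) :
    ‖pvL w d (zv d i)‖^2 = d i * lev1 w d i := by
  rw [zv_eq_smul, _root_.map_smul, norm_smul]
  unfold lev1
  rw [mul_pow]
  congr 1
  simp [Real.sq_sqrt (hd i), Real.norm_eq_abs, sq_abs]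

lemma norm_single_one (i : Fin n) : ‖EuclideanSpace.single i (1:ℝ)‖ = 1 := by
  rw [EuclideanSpace.norm_single]; norm_num

lemma lev1_le_one (w : Fin l → Fin n → ℝ) (d : Fin n → ℝ) (i : Fin n) : lev1 w d i ≤ 1 := by
  unfold lev1
  have h := norm_pvL_le w d (EuclideanSpace.single i (1:ℝ))
  rw [norm_single_one] at h
  simpa using h

lemma norm_sq_coords (x : EuclideanSpace ℝ (Fin n)) : ‖x‖^2 = ∑ i, (x i)^2 := by
  rw [EuclideanSpace.norm_eq, Real.sq_sqrt]
  · exact Finset.sum_congr rfl fun i _ => by rw [Real.norm_eq_abs, sq_abs]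
  · positivity

lemma sum_lev1_le (w : Fin l → Fin n → ℝ) (d : Fin n → ℝ) :
    ∑ i, lev1 w d i ≤ (l : ℝ) := by
  classical
  set V := Vsp w d
  haveI : FiniteDimensional ℝ V := inferInstance
  set r := Module.finrank ℝ V with hr
  set B := stdOrthonormalBasis ℝ V with hB
  have key : ∀ i, lev1 w d i = ∑ ρ : Fin r, (⟪((B ρ) : EuclideanSpace ℝ (Fin n)),
      EuclideanSpace.single i 1⟫)^2 := by
    intro i
    unfold lev1
    set e : EuclideanSpace ℝ (Fin n) := EuclideanSpace.single i 1
    have h1 : pvL w d e = ((V.orthogonalProjectionOnto e : V) : EuclideanSpace ℝ (Fin n)) := rfl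
    rw [h1]
    have h2 : ‖((V.orthogonalProjectionOnto e : V) : EuclideanSpace ℝ (Fin n))‖
        = ‖(V.orthogonalProjectionOnto e : V)‖ := rfl
    rw [h2, ← B.repr.norm_map (V.orthogonalProjectionOnto e : V), norm_sq_coords]
    refine Finset.sum_congr rfl fun ρ _ => ?_
    rw [B.repr_apply_apply]
    congr 1
    have h3 : ⟪B ρ, (V.orthogonalProjectionOnto e : V)⟫
        = ⟪((B ρ) : EuclideanSpace ℝ (Fin n)), ((V.orthogonalProjectionOnto e : V) : EuclideanSpace ℝ (Fin n))⟫ := rfl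
    rw [h3]
    have h4 : ⟪e - ((V.orthogonalProjectionOnto e : V) : EuclideanSpace ℝ (Fin n)), ((B ρ) : EuclideanSpace ℝ (Fin n))⟫ = 0 :=
      Submodule.starProjection_inner_eq_zero e _ (SetLike.coe_mem _)
    have h5 : ⟪((B ρ) : EuclideanSpace ℝ (Fin n)), e - ((V.orthogonalProjectionOnto e : V) : EuclideanSpace ℝ (Fin n))⟫ = 0 := by
      rw [real_inner_comm]; exact h4
    rw [inner_sub_right] at h5
    linarith
  calc ∑ i, lev1 w d i
      = ∑ i, ∑ ρ : Fin r, (⟪((B ρ) : EuclideanSpace ℝ (Fin n)), EuclideanSpace.single i 1⟫)^2 :=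
        Finset.sum_congr rfl fun i _ => key i
    _ = ∑ ρ : Fin r, ∑ i, (⟪((B ρ) : EuclideanSpace ℝ (Fin n)), EuclideanSpace.single i 1⟫)^2 :=
        Finset.sum_comm
    _ = ∑ ρ : Fin r, ‖((B ρ) : EuclideanSpace ℝ (Fin n))‖^2 := by
        refine Finset.sum_congr rfl fun ρ _ => ?_
        rw [norm_sq_coords]
        refine Finset.sum_congr rfl fun i _ => ?_
        rw [EuclideanSpace.inner_single_right]
        simp
    _ = ∑ _ρ : Fin r, (1:ℝ) := by
        refine Finset.sum_congr rfl fun ρ _ => ?_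
        have : ‖B ρ‖ = 1 := B.orthonormal.1 ρ
        have h2 : ‖((B ρ) : EuclideanSpace ℝ (Fin n))‖ = ‖B ρ‖ := rfl
        rw [h2, this]; norm_num
    _ = (r : ℝ) := by simp
    _ ≤ (l : ℝ) := by
        have : r ≤ l := by
          haveI : Fintype ↑(Set.range (yv w d)) := Set.fintypeRange _
          refine le_trans (finrank_span_le_card (R := ℝ) (Set.range (yv w d))) ?_
          have h2 : (Set.range (yv w d)).toFinset ⊆ Finset.univ.image (yv w d) := by
            intro a ha; simp at ha ⊢; simpa using ha
          calc (Set.range (yv w d)).toFinset.card ≤ (Finset.univ.image (yv w d)).card :=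
              Finset.card_le_card h2
            _ ≤ (Finset.univ : Finset (Fin l)).card := Finset.card_image_le
            _ = l := by simp
        exact_mod_cast this

def wcol (w : Fin l → Fin n → ℝ) (i : Fin n) : Fin l → ℝ := fun k => w k i

noncomputable def Amat (w : Fin l → Fin n → ℝ) (d : Fin n → ℝ) (ε : ℝ) :
    Matrix (Fin l) (Fin l) ℝ :=
  Matrix.of fun k k' => (∑ i, d i * (w k i * w k' i)) + (if k = k' then ε else 0)

lemma Amat_sym (w : Fin l → Fin n → ℝ) (d : Fin n → ℝ) (ε : ℝ) :
    (Amat w d ε)ᵀ = Amat w d ε := by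
  ext k k'
  simp only [Matrix.transpose_apply, Amat, Matrix.of_apply]
  congr 1
  · exact Finset.sum_congr rfl fun i _ => by ring
  · simp [eq_comm]

lemma quad_Amat (w : Fin l → Fin n → ℝ) (d : Fin n → ℝ) (ε : ℝ) (x : Fin l → ℝ) :
    dotProduct x ((Amat w d ε) *ᵥ x) = qf w d x + ε * ∑ k, (x k)^2 := by
  have expand : ∀ k, x k * (((Amat w d ε) *ᵥ x) k)
      = (∑ k', ∑ i, x k * (d i * (w k i * w k' i)) * x k') + ε * (x k)^2 := by
    intro k
    have h1 : ((Amat w d ε) *ᵥ x) k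
        = (∑ k', (∑ i, d i * (w k i * w k' i)) * x k') + ε * x k := by
      unfold Matrix.mulVec dotProduct Amat
      simp only [Matrix.of_apply]
      rw [show (∑ k', ((∑ i, d i * (w k i * w k' i)) + (if k = k' then ε else 0)) * x k')
          = (∑ k', (∑ i, d i * (w k i * w k' i)) * x k')
            + (∑ k', (if k = k' then ε else 0) * x k')
        from by rw [← Finset.sum_add_distrib]; exact Finset.sum_congr rfl fun k' _ => by ring]
      congr 1
      rw [show (∑ k', (if k = k' then ε else 0) * x k') = ∑ k', (if k = k' then ε * x k' else 0)
        from Finset.sum_congr rfl fun k' _ => by split <;> simp]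
      rw [Finset.sum_ite_eq]
      simp
    rw [h1, mul_add]
    congr 1
    · rw [Finset.mul_sum]
      refine Finset.sum_congr rfl fun k' _ => ?_
      rw [Finset.sum_mul, Finset.mul_sum]
      exact Finset.sum_congr rfl fun i _ => by ring
    · ring
  have swap : (∑ k, ∑ k', ∑ i, x k * (d i * (w k i * w k' i)) * x k')
      = ∑ i, ∑ k, ∑ k', x k * (d i * (w k i * w k' i)) * x k' := by
    rw [show (∑ k, ∑ k', ∑ i, x k * (d i * (w k i * w k' i)) * x k')
        = ∑ k, ∑ i, ∑ k', x k * (d i * (w k i * w k' i)) * x k'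
      from Finset.sum_congr rfl fun k _ => Finset.sum_comm]
    exact Finset.sum_comm
  have periI : ∀ i, (∑ k, ∑ k', x k * (d i * (w k i * w k' i)) * x k')
      = d i * (cx w x i)^2 := by
    intro i
    have hsq : (cx w x i)^2 = ∑ k, ∑ k', (x k * w k i) * (x k' * w k' i) := by
      rw [sq]
      unfold cx
      rw [Finset.sum_mul_sum]
    rw [hsq, Finset.mul_sum]
    refine Finset.sum_congr rfl fun k _ => ?_
    rw [Finset.mul_sum]
    exact Finset.sum_congr rfl fun k' _ => by ring
  calc dotProduct x ((Amat w d ε) *ᵥ x)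
      = ∑ k, ((∑ k', ∑ i, x k * (d i * (w k i * w k' i)) * x k') + ε * (x k)^2) :=
        Finset.sum_congr rfl fun k _ => expand k
    _ = (∑ k, ∑ k', ∑ i, x k * (d i * (w k i * w k' i)) * x k') + ε * ∑ k, (x k)^2 := by
        rw [Finset.sum_add_distrib, Finset.mul_sum]
    _ = (∑ i, ∑ k, ∑ k', x k * (d i * (w k i * w k' i)) * x k') + ε * ∑ k, (x k)^2 := by
        rw [swap]
    _ = qf w d x + ε * ∑ k, (x k)^2 := by
        unfold qf
        rw [Finset.sum_congr rfl fun i _ => periI i]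

lemma sum_sq_pos_of_ne_zero {x : Fin l → ℝ} (hx : x ≠ 0) : 0 < ∑ k, (x k)^2 := by
  rcases Function.ne_iff.mp hx with ⟨k, hk⟩
  have : (0:ℝ) < (x k)^2 := lt_of_le_of_ne (sq_nonneg _) (Ne.symm (pow_ne_zero 2 hk))
  refine lt_of_lt_of_le this ?_
  refine Finset.single_le_sum (f := fun k => (x k)^2) (fun j _ => by positivity) (mem_univ k)

lemma qf_nonneg (w : Fin l → Fin n → ℝ) {d : Fin n → ℝ} (hd : ∀ i, 0 ≤ d i) (x : Fin l → ℝ) :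
    0 ≤ qf w d x := by
  refine Finset.sum_nonneg fun i _ => ?_
  have := hd i
  positivity

lemma Amat_posdef (w : Fin l → Fin n → ℝ) {d : Fin n → ℝ} {ε : ℝ}
    (hd : ∀ i, 0 ≤ d i) (hε : 0 < ε) : (Amat w d ε).PosDef := by
  rw [Matrix.posDef_iff_dotProduct_mulVec]
  constructor
  · show (Amat w d ε).conjTranspose = Amat w d ε
    have h := Amat_sym w d ε
    ext k k'
    rw [Matrix.conjTranspose_apply, star_trivial]
    conv_lhs => rw [← h]
    rfl
  · intro x hx
    rw [star_trivial, quad_Amat]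
    have h1 := qf_nonneg w hd x
    have h2 := sum_sq_pos_of_ne_zero hx
    nlinarith


lemma dot_mulVec_symm {M : Matrix (Fin l) (Fin l) ℝ} (hM : Mᵀ = M) (u v : Fin l → ℝ) :
    dotProduct u (M *ᵥ v) = dotProduct v (M *ᵥ u) := by
  rw [Matrix.dotProduct_mulVec]
  conv_lhs => rw [← hM]
  rw [Matrix.vecMul_transpose]
  exact dotProduct_comm _ _

lemma CS_psd {M : Matrix (Fin l) (Fin l) ℝ} (hM : Mᵀ = M)
    (hpsd : ∀ x, 0 ≤ dotProduct x (M *ᵥ x)) (h x : Fin l → ℝ) :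
    (dotProduct (M *ᵥ h) x)^2
      ≤ (dotProduct h (M *ᵥ h)) * (dotProduct x (M *ᵥ x)) := by
  set a := dotProduct h (M *ᵥ h) with ha
  set b := dotProduct (M *ᵥ h) x with hb
  set c := dotProduct x (M *ᵥ x) with hc
  have hb1 : dotProduct x (M *ᵥ h) = b := by rw [hb]; exact dotProduct_comm _ _
  have hb2 : dotProduct h (M *ᵥ x) = b := by
    rw [dot_mulVec_symm hM]; exact hb1
  have key : ∀ s : ℝ, 0 ≤ a * (s*s) + (2*b) * s + c := by
    intro s
    have h0 := hpsd (s • h + x)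
    rw [Matrix.mulVec_add, Matrix.mulVec_smul] at h0
    rw [add_dotProduct, smul_dotProduct] at h0
    rw [dotProduct_add, dotProduct_add] at h0
    rw [dotProduct_smul, dotProduct_smul] at h0
    rw [smul_eq_mul, smul_eq_mul, smul_eq_mul] at h0
    rw [← ha, ← hc, hb1, hb2] at h0
    nlinarith [h0]
  have hd := discrim_le_zero key
  unfold discrim at hd
  nlinarith [hd]

section InvFacts

variable (w : Fin l → Fin n → ℝ) {d : Fin n → ℝ} {ε : ℝ}

lemma Amat_det_isUnit (hd : ∀ i, 0 ≤ d i) (hε : 0 < ε) : IsUnit (Amat w d ε).det :=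
  isUnit_iff_ne_zero.mpr (ne_of_gt (Amat_posdef w hd hε).det_pos)

lemma Amat_inv_vec (hd : ∀ i, 0 ≤ d i) (hε : 0 < ε) (p : Fin l → ℝ) :
    (Amat w d ε) *ᵥ ((Amat w d ε)⁻¹ *ᵥ p) = p := by
  rw [Matrix.mulVec_mulVec, Matrix.mul_nonsing_inv _ (Amat_det_isUnit w hd hε),
    Matrix.one_mulVec]

lemma Amat_quad_nonneg (hd : ∀ i, 0 ≤ d i) (hε : 0 < ε) (x : Fin l → ℝ) :
    0 ≤ dotProduct x ((Amat w d ε) *ᵥ x) := by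
  rw [quad_Amat]
  have h1 := qf_nonneg w hd x
  have h2 : (0:ℝ) ≤ ∑ k, (x k)^2 := Finset.sum_nonneg fun k _ => sq_nonneg _
  nlinarith

lemma Ninv_quad_nonneg (hd : ∀ i, 0 ≤ d i) (hε : 0 < ε) (p : Fin l → ℝ) :
    0 ≤ dotProduct p ((Amat w d ε)⁻¹ *ᵥ p) := by
  set g := (Amat w d ε)⁻¹ *ᵥ p with hg
  have h1 : p = (Amat w d ε) *ᵥ g := (Amat_inv_vec w hd hε p).symm
  calc (0:ℝ) ≤ dotProduct g ((Amat w d ε) *ᵥ g) := Amat_quad_nonneg w hd hε g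
    _ = dotProduct ((Amat w d ε) *ᵥ g) g := dotProduct_comm _ _
    _ = dotProduct p g := by rw [← h1]
    _ = dotProduct p ((Amat w d ε)⁻¹ *ᵥ p) := rfl

/-- the regularized leverage quantity σ_i -/
noncomputable def sigma (w : Fin l → Fin n → ℝ) (d : Fin n → ℝ) (ε : ℝ) (i : Fin n) : ℝ :=
  dotProduct (wcol w i) ((Amat w d ε)⁻¹ *ᵥ (wcol w i))

lemma sigma_nonneg (hd : ∀ i, 0 ≤ d i) (hε : 0 < ε) (i : Fin n) : 0 ≤ sigma w d ε i :=
  Ninv_quad_nonneg w hd hε _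

lemma cx_dot (x : Fin l → ℝ) (i : Fin n) : cx w x i = dotProduct (wcol w i) x := by
  unfold cx wcol dotProduct
  exact Finset.sum_congr rfl fun k _ => mul_comm _ _

/-- Cauchy–Schwarz against the regularized matrix -/
lemma cx_sq_le_sigma (hd : ∀ i, 0 ≤ d i) (hε : 0 < ε) (i : Fin n) (x : Fin l → ℝ) :
    (cx w x i)^2 ≤ sigma w d ε i * (qf w d x + ε * ∑ k, (x k)^2) := by
  set h := (Amat w d ε)⁻¹ *ᵥ (wcol w i) with hh
  have h1 : (Amat w d ε) *ᵥ h = wcol w i := Amat_inv_vec w hd hε _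
  have h2 := CS_psd (Amat_sym w d ε) (Amat_quad_nonneg w hd hε) h x
  rw [h1] at h2
  have h3 : dotProduct h (wcol w i) = sigma w d ε i := by
    unfold sigma
    rw [← hh]
    exact dotProduct_comm _ _
  rw [h3, quad_Amat] at h2
  rw [cx_dot]
  exact h2

/-- at `h = N w̃_i`, the coefficient equals σ and the quadratic form is ≤ σ -/
lemma attainer_props (hd : ∀ i, 0 ≤ d i) (hε : 0 < ε) (i : Fin n) :
    cx w ((Amat w d ε)⁻¹ *ᵥ (wcol w i)) i = sigma w d ε i ∧
    qf w d ((Amat w d ε)⁻¹ *ᵥ (wcol w i)) ≤ sigma w d ε i := by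
  set h := (Amat w d ε)⁻¹ *ᵥ (wcol w i) with hh
  have h1 : (Amat w d ε) *ᵥ h = wcol w i := Amat_inv_vec w hd hε _
  constructor
  · rw [cx_dot, hh]
    rfl
  · have h2 : dotProduct h ((Amat w d ε) *ᵥ h) = sigma w d ε i := by
      rw [h1]
      show dotProduct h (wcol w i) = dotProduct (wcol w i) ((Amat w d ε)⁻¹ *ᵥ (wcol w i))
      rw [← hh]
      exact dotProduct_comm _ _
    have h3 := quad_Amat w d ε h
    rw [h2] at h3
    have h4 : (0:ℝ) ≤ ε * ∑ k, (h k)^2 := by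
      have : (0:ℝ) ≤ ∑ k, (h k)^2 := Finset.sum_nonneg fun k _ => sq_nonneg _
      positivity
    linarith

/-- trace bound: `∑ d_i σ_i ≤ l` -/
lemma sum_d_sigma_le (hd : ∀ i, 0 ≤ d i) (hε : 0 < ε) :
    ∑ i, d i * sigma w d ε i ≤ (l:ℝ) := by
  classical
  set N := (Amat w d ε)⁻¹ with hN
  have step1 : ∑ i, d i * sigma w d ε i
      = ∑ k, ∑ k', N k k' * (∑ i, d i * (w k' i * w k i)) := by
    have e1 : ∀ i, d i * sigma w d ε i = ∑ k, ∑ k', d i * (w k i * (N k k' * w k' i)) := by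
      intro i
      have hs : sigma w d ε i = ∑ k, w k i * (∑ k', N k k' * w k' i) := by
        rw [hN]; rfl
      rw [hs, Finset.mul_sum]
      refine Finset.sum_congr rfl fun k _ => ?_
      have h5 : w k i * (∑ k', N k k' * w k' i) = ∑ k', w k i * (N k k' * w k' i) :=
        Finset.mul_sum _ _ _
      rw [h5, Finset.mul_sum]
    calc ∑ i, d i * sigma w d ε i
        = ∑ i, ∑ k, ∑ k', d i * (w k i * (N k k' * w k' i)) :=
          Finset.sum_congr rfl fun i _ => e1 i
      _ = ∑ k, ∑ i, ∑ k', d i * (w k i * (N k k' * w k' i)) := Finset.sum_comm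
      _ = ∑ k, ∑ k', ∑ i, d i * (w k i * (N k k' * w k' i)) :=
          Finset.sum_congr rfl fun k _ => Finset.sum_comm
      _ = ∑ k, ∑ k', N k k' * (∑ i, d i * (w k' i * w k i)) := by
          refine Finset.sum_congr rfl fun k _ => Finset.sum_congr rfl fun k' _ => ?_
          rw [Finset.mul_sum]
          exact Finset.sum_congr rfl fun i _ => by ring
  have step2 : ∀ k k', (∑ i, d i * (w k' i * w k i))
      = Amat w d ε k' k - (if k' = k then ε else 0) := by
    intro k k'
    unfold Amat
    simp only [Matrix.of_apply]
    ring
  have step3 : ∑ i, d i * sigma w d ε i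
      = (∑ k, (N * (Amat w d ε)) k k) - ε * ∑ k, N k k := by
    rw [step1]
    have e2 : ∀ k, ∑ k', N k k' * (∑ i, d i * (w k' i * w k i))
        = (N * (Amat w d ε)) k k - ε * N k k := by
      intro k
      rw [Finset.sum_congr rfl fun k' _ => by rw [step2 k k']]
      rw [show (∑ k', N k k' * (Amat w d ε k' k - if k' = k then ε else 0))
          = (∑ k', N k k' * Amat w d ε k' k) - (∑ k', N k k' * if k' = k then ε else 0)
        from by rw [← Finset.sum_sub_distrib]; exact Finset.sum_congr rfl fun k' _ => by ring]
      have g1 : (∑ k', N k k' * Amat w d ε k' k) = (N * (Amat w d ε)) k k := by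
        rw [Matrix.mul_apply]
      have g2 : (∑ k', N k k' * if k' = k then ε else 0) = ε * N k k := by
        rw [show (∑ k', N k k' * if k' = k then ε else 0)
            = ∑ k', (if k' = k then N k k' * ε else 0) from
          Finset.sum_congr rfl fun k' _ => by split <;> simp]
        rw [Finset.sum_ite_eq']
        simp [mul_comm]
      rw [g1, g2]
    rw [Finset.sum_congr rfl fun k _ => e2 k, Finset.sum_sub_distrib, Finset.mul_sum]
  have step4 : (∑ k, (N * (Amat w d ε)) k k) = (l:ℝ) := by
    rw [hN, Matrix.nonsing_inv_mul _ (Amat_det_isUnit w hd hε)]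
    rw [show (∑ k, (1 : Matrix (Fin l) (Fin l) ℝ) k k) = ∑ k : Fin l, (1:ℝ) from
      Finset.sum_congr rfl fun k _ => by rw [Matrix.one_apply]; simp]
    simp
  have step5 : 0 ≤ ∑ k, N k k := by
    refine Finset.sum_nonneg fun k _ => ?_
    set p : Fin l → ℝ := fun j => if k = j then 1 else 0 with hp
    have hNp : (N *ᵥ p) k = N k k := by
      show (∑ j, N k j * p j) = N k k
      rw [show (∑ j, N k j * p j) = ∑ j, (if k = j then N k j else 0) from
        Finset.sum_congr rfl fun j _ => by by_cases hkj : k = j <;> simp [hp, hkj]]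
      rw [Finset.sum_ite_eq]
      simp
    have h1 : dotProduct p (N *ᵥ p) = N k k := by
      show (∑ j, p j * (N *ᵥ p) j) = N k k
      rw [show (∑ j, p j * (N *ᵥ p) j) = ∑ j, (if k = j then (N *ᵥ p) j else 0) from
        Finset.sum_congr rfl fun j _ => by by_cases hkj : k = j <;> simp [hp, hkj]]
      rw [Finset.sum_ite_eq]
      simp [hNp]
    rw [← h1]
    exact Ninv_quad_nonneg w hd hε _
  rw [step3, step4]
  nlinarith [mul_nonneg hε.le step5]

end InvFacts

lemma qf_update (w : Fin l → Fin n → ℝ) (d : Fin n → ℝ) (i : Fin n) (a : ℝ) (x : Fin l → ℝ) :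
    qf w (Function.update d i a) x = qf w d x + (a - d i) * (cx w x i)^2 := by
  unfold qf
  have h1 : ∀ j, Function.update d i a j * (cx w x j)^2
      = (if j = i then (a - d i) * (cx w x i)^2 else 0) + d j * (cx w x j)^2 := by
    intro j
    by_cases hj : j = i
    · subst hj; rw [Function.update_self, if_pos rfl]; ring
    · rw [Function.update_of_ne hj, if_neg hj]; ring
  rw [Finset.sum_congr rfl fun j _ => h1 j, Finset.sum_add_distrib]
  rw [Finset.sum_ite_eq' Finset.univ i (fun _ => (a - d i) * (cx w x i)^2)]
  simp [add_comm]

lemma sum_update (d : Fin n → ℝ) (i : Fin n) (a : ℝ) :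
    ∑ j, Function.update d i a j = (∑ j, d j) + (a - d i) := by
  have h1 : ∀ j, Function.update d i a j
      = (if j = i then (a - d i) else 0) + d j := by
    intro j
    by_cases hj : j = i
    · subst hj; rw [Function.update_self, if_pos rfl]; ring
    · rw [Function.update_of_ne hj, if_neg hj]; ring
  rw [Finset.sum_congr rfl fun j _ => h1 j, Finset.sum_add_distrib]
  rw [Finset.sum_ite_eq' Finset.univ i (fun _ => (a - d i))]
  simp [add_comm]

/-- Stage lemma: for each ε > 0 there are weights with the ε-regularized feasibility and
the trace bound. -/
lemma stage {β : ℝ} (hβ0 : 0 < β) (hβ1 : β < 1) (w : Fin l → Fin n → ℝ) {ε : ℝ} (hε : 0 < ε) :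
    ∃ d : Fin n → ℝ, (∀ i, 0 ≤ d i ∧ d i ≤ 1) ∧
      (∀ i x, d i * (cx w x i)^2 ≤ (1-β) * (qf w d x + ε * ∑ k, (x k)^2)) ∧
      ((n:ℝ) - l - β*n ≤ ∑ i, (d i - lev w d i)) := by
  classical
  set K : Set (Fin n → ℝ) := {d | d ∈ Set.Icc 0 1 ∧
    ∀ i x, d i * (cx w x i)^2 ≤ (1-β) * (qf w d x + ε * ∑ k, (x k)^2)} with hK
  have hKsub : K ⊆ Set.Icc 0 1 := fun d hd => hd.1
  have hqcont : ∀ x : Fin l → ℝ, Continuous fun d : Fin n → ℝ => qf w d x := by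
    intro x
    unfold qf
    exact continuous_finset_sum _ fun j _ => (continuous_apply j).mul continuous_const
  have hclosed : IsClosed K := by
    have hKeq : K = Set.Icc 0 1 ∩ ⋂ (i : Fin n), ⋂ (x : Fin l → ℝ),
        {d : Fin n → ℝ | d i * (cx w x i)^2 ≤ (1-β) * (qf w d x + ε * ∑ k, (x k)^2)} := by
      ext d
      simp only [hK, Set.mem_setOf_eq, Set.mem_inter_iff, Set.mem_iInter]
    rw [hKeq]
    refine IsClosed.inter isClosed_Icc (isClosed_iInter fun i => isClosed_iInter fun x => ?_)
    refine isClosed_le ((continuous_apply i).mul continuous_const) ?_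
    exact continuous_const.mul ((hqcont x).add continuous_const)
  have hcpt : IsCompact K := IsCompact.of_isClosed_subset isCompact_Icc hclosed hKsub
  have h0K : (0 : Fin n → ℝ) ∈ K := by
    constructor
    · exact Set.mem_Icc.mpr ⟨le_refl _, fun i => by norm_num⟩
    · intro i x
      have hq0 : qf w (0 : Fin n → ℝ) x = 0 := by
        unfold qf; simp
      rw [hq0]
      have hs : (0:ℝ) ≤ ∑ k, (x k)^2 := Finset.sum_nonneg fun k _ => sq_nonneg _
      have h1 : (0:ℝ) ≤ (1-β) * (0 + ε * ∑ k, (x k)^2) := by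
        refine mul_nonneg (by linarith) ?_
        have : (0:ℝ) ≤ ε * ∑ k, (x k)^2 := mul_nonneg hε.le hs
        linarith
      simpa using h1
  obtain ⟨d, hdK, hmax⟩ := hcpt.exists_isMaxOn ⟨0, h0K⟩
    ((continuous_finset_sum Finset.univ fun i _ => continuous_apply i).continuousOn
      (f := fun d : Fin n → ℝ => ∑ i, d i))
  have hd01 : ∀ i, 0 ≤ d i ∧ d i ≤ 1 := by
    intro i
    have h := Set.mem_Icc.mp hdK.1
    exact ⟨h.1 i, h.2 i⟩
  have hd0 : ∀ i, 0 ≤ d i := fun i => (hd01 i).1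
  have hfeas := hdK.2
  -- KKT-type tightness
  have tight : ∀ i, d i < 1 → 1-β ≤ d i * sigma w d ε i := by
    intro i hi
    by_contra hcon
    push_neg at hcon
    set σ := sigma w d ε i with hσ
    have hσ0 : 0 ≤ σ := sigma_nonneg w hd0 hε i
    set t := min (1 - d i) ((1-β - d i * σ)/(σ + 1)) with ht
    have ht0 : 0 < t := lt_min (by linarith) (div_pos (by linarith) (by linarith))
    have htσ : (d i + t) * σ ≤ 1-β := by
      have h1 : t ≤ (1-β - d i * σ)/(σ+1) := min_le_right _ _
      have h2 : t * (σ+1) ≤ 1-β - d i * σ := by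
        have h3 : (0:ℝ) < σ + 1 := by linarith
        calc t * (σ+1) ≤ ((1-β - d i * σ)/(σ+1)) * (σ+1) :=
              mul_le_mul_of_nonneg_right h1 h3.le
          _ = 1-β - d i * σ := div_mul_cancel₀ _ h3.ne'
      nlinarith [ht0.le, hσ0]
    set d' := Function.update d i (d i + t) with hd'
    have hd'K : d' ∈ K := by
      constructor
      · refine Set.mem_Icc.mpr ⟨fun j => ?_, fun j => ?_⟩
        · show (0:ℝ) ≤ d' j
          by_cases hj : j = i
          · subst hj; rw [hd', Function.update_self]; linarith [(hd01 j).1]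
          · rw [hd', Function.update_of_ne hj]; exact (hd01 j).1
        · show d' j ≤ (1:ℝ)
          by_cases hj : j = i
          · subst hj; rw [hd', Function.update_self]
            have h4 : t ≤ 1 - d j := by rw [ht]; exact min_le_left _ _
            linarith
          · rw [hd', Function.update_of_ne hj]; exact (hd01 j).2
      · intro j x
        have hq' : qf w d' x = qf w d x + t * (cx w x i)^2 := by
          rw [hd', qf_update]; ring
        have hqmono : qf w d x ≤ qf w d' x := by
          rw [hq']; nlinarith [sq_nonneg (cx w x i), ht0.le]
        have hsx : (0:ℝ) ≤ ∑ k, (x k)^2 := Finset.sum_nonneg fun k _ => sq_nonneg _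
        have hqx0 : (0:ℝ) ≤ qf w d x + ε * ∑ k, (x k)^2 := by
          have h6 := qf_nonneg w hd0 x
          have h7 : (0:ℝ) ≤ ε * ∑ k, (x k)^2 := mul_nonneg hε.le hsx
          linarith
        by_cases hji : j = i
        · subst hji
          rw [hd', Function.update_self]
          have hCS := cx_sq_le_sigma w hd0 hε j x
          calc (d j + t) * (cx w x j)^2
              ≤ (d j + t) * (σ * (qf w d x + ε * ∑ k, (x k)^2)) := by
                refine mul_le_mul_of_nonneg_left ?_ (by linarith [(hd01 j).1, ht0.le])
                rw [hσ]; exact hCS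
            _ = ((d j + t) * σ) * (qf w d x + ε * ∑ k, (x k)^2) := by ring
            _ ≤ (1-β) * (qf w d x + ε * ∑ k, (x k)^2) :=
                mul_le_mul_of_nonneg_right htσ hqx0
            _ ≤ (1-β) * (qf w d' x + ε * ∑ k, (x k)^2) := by nlinarith [hqmono]
        · rw [hd', Function.update_of_ne hji]
          calc d j * (cx w x j)^2 ≤ (1-β) * (qf w d x + ε * ∑ k, (x k)^2) := hfeas j x
            _ ≤ (1-β) * (qf w d' x + ε * ∑ k, (x k)^2) := by nlinarith [hqmono]
    have hsum : ∑ j, d' j = (∑ j, d j) + t := by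
      rw [hd', sum_update]; ring
    have hle := hmax hd'K
    simp only [Set.mem_setOf_eq] at hle
    rw [hsum] at hle
    linarith
  -- accounting
  refine ⟨d, hd01, hfeas, ?_⟩
  set T := Finset.univ.filter (fun i => d i < 1) with hT
  have key1 : ∀ i ∈ T, 1-β ≤ lev1 w d i := by
    intro i hiT
    have hi : d i < 1 := (Finset.mem_filter.mp hiT).2
    have htight := tight i hi
    have hσ0 : 0 ≤ sigma w d ε i := sigma_nonneg w hd0 hε i
    have hd_pos : 0 < d i := by nlinarith [(hd01 i).1, hβ1]
    have hσpos : 0 < sigma w d ε i := by nlinarith [(hd01 i).2]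
    obtain ⟨ha1, ha2⟩ := attainer_props w hd0 hε i
    set h := (Amat w d ε)⁻¹ *ᵥ (wcol w i) with hh
    set v := ∑ k, h k • yv w d k with hv
    have hvmem : v ∈ Vsp w d := by
      rw [hv]
      exact Submodule.sum_mem _ fun k _ =>
        Submodule.smul_mem _ _ (Submodule.subset_span (Set.mem_range_self k))
    have hinner : ⟪zv d i, v⟫ = d i * sigma w d ε i := by
      rw [hv, inner_zv_comb w d hd0, ha1]
    have hnv : ‖v‖^2 = qf w d h := norm_comb_sq w d hd0 h
    have hCS := inner_sq_le_lev w d (zv d i) v hvmem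
    rw [hinner, hnv] at hCS
    have hlev0 : (0:ℝ) ≤ ‖pvL w d (zv d i)‖^2 := sq_nonneg _
    have h2 : ‖pvL w d (zv d i)‖^2 * qf w d h ≤ ‖pvL w d (zv d i)‖^2 * sigma w d ε i :=
      mul_le_mul_of_nonneg_left ha2 hlev0
    have hlev_ge : (1-β) * d i ≤ ‖pvL w d (zv d i)‖^2 := by
      nlinarith [htight, hd_pos, hσpos, hCS, h2]
    have hleveq : ‖pvL w d (zv d i)‖^2 = d i * lev1 w d i := lev_eq w d hd0 i
    rw [hleveq] at hlev_ge
    have := (mul_le_mul_iff_of_pos_right hd_pos).mp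
      (by linarith : (1-β) * d i ≤ lev1 w d i * d i)
    linarith
  have hTcard : (T.card : ℝ) ≤ (n:ℝ) := by
    have := Finset.card_filter_le Finset.univ (fun i => d i < 1)
    have h2 : (Finset.univ : Finset (Fin n)).card = n := by simp
    exact_mod_cast (h2 ▸ this)
  have hlev1_le : ∀ i, lev1 w d i ≤ 1 := lev1_le_one w d
  have hlev1_0 : ∀ i, 0 ≤ lev1 w d i := fun i => sq_nonneg _
  have hsplit : ∀ i, d i - lev w d i = d i * (1 - lev1 w d i) := by
    intro i
    have : lev w d i = d i * lev1 w d i := lev_eq w d hd0 i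
    rw [this]; ring
  have hterm : ∀ i, (if i ∈ T then (0:ℝ) else 1 - lev1 w d i) ≤ d i - lev w d i := by
    intro i
    rw [hsplit i]
    by_cases hiT : i ∈ T
    · simp only [hiT, if_true]
      exact mul_nonneg (hd0 i) (by linarith [hlev1_le i])
    · simp only [hiT, if_false]
      have hdi : d i = 1 := by
        have h1 : ¬ (d i < 1) := by
          intro hc
          exact hiT (Finset.mem_filter.mpr ⟨Finset.mem_univ i, hc⟩)
        exact le_antisymm (hd01 i).2 (not_lt.mp h1)
      rw [hdi]; ring_nf; exact le_refl _
  have hsum1 : ∑ i, (if i ∈ T then (0:ℝ) else 1 - lev1 w d i) ≤ ∑ i, (d i - lev w d i) :=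
    Finset.sum_le_sum fun i _ => hterm i
  -- compute the left side
  have hsplitsum : ∑ i, (if i ∈ T then (0:ℝ) else 1 - lev1 w d i)
      = ∑ i, (1 - lev1 w d i) - ∑ i ∈ T, (1 - lev1 w d i) := by
    rw [show (∑ i, (if i ∈ T then (0:ℝ) else 1 - lev1 w d i))
        = ∑ i, ((1 - lev1 w d i) - (if i ∈ T then (1 - lev1 w d i) else 0)) from
      Finset.sum_congr rfl fun i _ => by by_cases hiT : i ∈ T <;> simp [hiT]]
    rw [Finset.sum_sub_distrib]
    congr 1
    rw [Finset.sum_ite_mem]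
    congr 1
    simp
  have hbound2 : ∑ i ∈ T, (1 - lev1 w d i) ≤ (1 - (1-β)) * T.card := by
    have : ∀ i ∈ T, 1 - lev1 w d i ≤ 1 - (1-β) := fun i hiT => by linarith [key1 i hiT]
    calc ∑ i ∈ T, (1 - lev1 w d i) ≤ ∑ _i ∈ T, (1 - (1-β)) := Finset.sum_le_sum this
      _ = (1 - (1-β)) * T.card := by rw [Finset.sum_const, nsmul_eq_mul]; ring
  have hbound3 : (n:ℝ) - (l:ℝ) ≤ ∑ i, (1 - lev1 w d i) := by
    rw [Finset.sum_sub_distrib]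
    have h1 : ∑ _i : Fin n, (1:ℝ) = (n:ℝ) := by simp
    have h2 := sum_lev1_le w d
    rw [h1]
    linarith
  have hβT : β * T.card ≤ β * n := mul_le_mul_of_nonneg_left hTcard hβ0.le
  have h5 : (1 - (1-β)) * (T.card:ℝ) = β * T.card := by ring
  linarith [hsum1, hsplitsum, hbound2, hbound3]
/-- bridge: true feasibility gives `lev ≤ (1-β) d_i` -/
lemma lev_le_of_feas {β : ℝ} (w : Fin l → Fin n → ℝ) {d : Fin n → ℝ}
    (hd0 : ∀ i, 0 ≤ d i) (hβ1 : β < 1)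
    (hfeas : ∀ i x, d i * (cx w x i)^2 ≤ (1-β) * qf w d x) (i : Fin n) :
    lev w d i ≤ (1-β) * d i := by
  set v := pvL w d (zv d i) with hv
  have hlev : lev w d i = ‖v‖^2 := rfl
  rcases eq_or_ne v 0 with h0 | hne
  · rw [hlev, h0]
    simp only [norm_zero]
    have : (0:ℝ) ≤ (1-β) * d i := mul_nonneg (by linarith) (hd0 i)
    simpa using this
  · obtain ⟨x, hx⟩ := (Submodule.mem_span_range_iff_exists_fun ℝ).mp (pvL_mem w d (zv d i))
    rw [← hv] at hx
    have h1 : ⟪zv d i, v⟫ = ‖v‖^2 := inner_zv_pvL w d (zv d i)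
    have h2 : ⟪zv d i, v⟫ = d i * cx w x i := by
      rw [← hx]; exact inner_zv_comb w d hd0 i x
    have h3 : ‖v‖^2 = qf w d x := by
      rw [← hx]; exact norm_comb_sq w d hd0 x
    have h12 : ‖v‖^2 = d i * cx w x i := by rw [← h1, h2]
    have hpos : 0 < ‖v‖^2 := by
      have := norm_pos_iff.mpr hne
      positivity
    have h6 : ‖v‖^2 * ‖v‖^2 ≤ ((1-β) * d i) * ‖v‖^2 := by
      calc ‖v‖^2 * ‖v‖^2 = d i * (d i * (cx w x i)^2) := by rw [h12]; ring
        _ ≤ d i * ((1-β) * qf w d x) := mul_le_mul_of_nonneg_left (hfeas i x) (hd0 i)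
        _ = ((1-β) * d i) * qf w d x := by ring
        _ = ((1-β) * d i) * ‖v‖^2 := by rw [h3]
    rw [hlev]
    exact le_of_mul_le_mul_right h6 hpos

lemma norm_zcomb_sq (d : Fin n → ℝ) (hd : ∀ i, 0 ≤ d i) (b : Fin n → ℝ) :
    ‖∑ i, b i • zv d i‖^2 = ∑ i, (b i)^2 * d i := by
  rw [← real_inner_self_eq_norm_sq, sum_inner]
  have h1 : ∀ i ∈ Finset.univ, ⟪b i • zv d i, ∑ j, b j • zv d j⟫ = (b i)^2 * d i := by
    intro i _
    rw [real_inner_smul_left, inner_sum]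
    rw [Finset.sum_eq_single i]
    · rw [real_inner_smul_right, inner_zv_zv d hd]
      simp; ring
    · intro j _ hji
      rw [real_inner_smul_right, inner_zv_zv d hd]
      simp [Ne.symm hji]
    · simp
  exact Finset.sum_congr rfl h1

/-- pull the projection through a linear combination -/
lemma comb_sub_pvL (w : Fin l → Fin n → ℝ) (d : Fin n → ℝ) (b : Fin n → ℝ) :
    ∑ i, b i • (zv d i - pvL w d (zv d i))
      = (∑ i, b i • zv d i) - pvL w d (∑ i, b i • zv d i) := by
  rw [map_sum]
  rw [show (∑ i, b i • (zv d i - pvL w d (zv d i)))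
      = ∑ i, (b i • zv d i - b i • pvL w d (zv d i)) from
    Finset.sum_congr rfl fun i _ => smul_sub _ _ _]
  rw [Finset.sum_sub_distrib]
  congr 1
  exact Finset.sum_congr rfl fun i _ => (map_smul (pvL w d) (b i) (zv d i)).symm

/-- final assembly -/
lemma assemble {β : ℝ} (hβ0 : 0 < β) (hβ1 : β < 1) (w : Fin l → Fin n → ℝ)
    {d : Fin n → ℝ} (hd01 : ∀ i, 0 ≤ d i ∧ d i ≤ 1)
    (hfeas : ∀ i x, d i * (cx w x i)^2 ≤ (1-β) * qf w d x)
    (B : ℝ) (hB : B ≤ ∑ i, (d i - lev w d i)) :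
    ∃ u : Fin n → EuclideanSpace ℝ (Fin n),
      (∀ k, ∑ i, w k i • u i = 0) ∧
      (∀ b : Fin n → ℝ, ‖∑ i, b i • u i‖ ^ 2 ≤ (1 / β) * ∑ i, (b i)^2 * ‖u i‖^2) ∧
      (∀ i, ‖u i‖ ≤ 1) ∧ B ≤ ∑ i, ‖u i‖^2 := by
  have hd0 : ∀ i, 0 ≤ d i := fun i => (hd01 i).1
  set u : Fin n → EuclideanSpace ℝ (Fin n) :=
    fun i => zv d i - pvL w d (zv d i) with hu
  have hnorm : ∀ i, ‖u i‖^2 = d i - lev w d i := by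
    intro i
    rw [hu]
    show ‖zv d i - pvL w d (zv d i)‖^2 = d i - lev w d i
    rw [norm_sub_pvL_sq w d (zv d i), norm_zv_sq d hd0 i]
    rfl
  have hlev0 : ∀ i, 0 ≤ lev w d i := fun i => sq_nonneg _
  have hβd : ∀ i, β * d i ≤ ‖u i‖^2 := by
    intro i
    rw [hnorm i]
    have := lev_le_of_feas w hd0 hβ1 hfeas i
    nlinarith [hd0 i]
  refine ⟨u, ?_, ?_, ?_, ?_⟩
  · intro k
    have h1 : ∑ i, w k i • u i
        = (∑ i, w k i • zv d i) - pvL w d (∑ i, w k i • zv d i) := comb_sub_pvL w d _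
    have h2 : (∑ i, w k i • zv d i) = yv w d k := rfl
    rw [h1, h2, pvL_of_mem w d (Submodule.subset_span (Set.mem_range_self k)), sub_self]
  · intro b
    have h1 : ∑ i, b i • u i
        = (∑ i, b i • zv d i) - pvL w d (∑ i, b i • zv d i) := comb_sub_pvL w d _
    have h2 : ‖∑ i, b i • u i‖^2 ≤ ‖∑ i, b i • zv d i‖^2 := by
      rw [h1, norm_sub_pvL_sq]
      nlinarith [sq_nonneg ‖pvL w d (∑ i, b i • zv d i)‖]
    have h3 : ‖∑ i, b i • zv d i‖^2 = ∑ i, (b i)^2 * d i := norm_zcomb_sq d hd0 b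
    have h4 : ∑ i, (b i)^2 * d i ≤ (1/β) * ∑ i, (b i)^2 * ‖u i‖^2 := by
      have h5 : ∀ i, (b i)^2 * d i ≤ (1/β) * ((b i)^2 * ‖u i‖^2) := by
        intro i
        have h6 : (b i)^2 * (β * d i) ≤ (b i)^2 * ‖u i‖^2 :=
          mul_le_mul_of_nonneg_left (hβd i) (sq_nonneg _)
        have h7 : (1/β) * ((b i)^2 * (β * d i)) = (b i)^2 * d i := by
          field_simp
        calc (b i)^2 * d i = (1/β) * ((b i)^2 * (β * d i)) := h7.symm
          _ ≤ (1/β) * ((b i)^2 * ‖u i‖^2) := by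
              refine mul_le_mul_of_nonneg_left h6 ?_
              positivity
      calc ∑ i, (b i)^2 * d i ≤ ∑ i, (1/β) * ((b i)^2 * ‖u i‖^2) :=
            Finset.sum_le_sum fun i _ => h5 i
        _ = (1/β) * ∑ i, (b i)^2 * ‖u i‖^2 := by rw [Finset.mul_sum]
    calc ‖∑ i, b i • u i‖^2 ≤ ∑ i, (b i)^2 * d i := by rw [← h3]; exact h2
      _ ≤ (1/β) * ∑ i, (b i)^2 * ‖u i‖^2 := h4
  · intro i
    have h1 : ‖u i‖^2 ≤ 1 := by
      rw [hnorm i]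
      have := hlev0 i
      linarith [(hd01 i).2]
    nlinarith [norm_nonneg (u i)]
  · calc B ≤ ∑ i, (d i - lev w d i) := hB
      _ = ∑ i, ‖u i‖^2 := Finset.sum_congr rfl fun i _ => (hnorm i).symm

lemma exists_good_d {β : ℝ} (hβ0 : 0 < β) (hβ1 : β < 1) (w : Fin l → Fin n → ℝ) :
    ∃ d : Fin n → ℝ, (∀ i, 0 ≤ d i ∧ d i ≤ 1) ∧
      (∀ i x, d i * (cx w x i)^2 ≤ (1-β) * qf w d x) ∧
      ((n:ℝ) - l - β*n ≤ ∑ i, (d i - lev w d i)) := by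
  classical
  have hstage : ∀ m : ℕ, ∃ d : Fin n → ℝ, (∀ i, 0 ≤ d i ∧ d i ≤ 1) ∧
      (∀ i x, d i * (cx w x i)^2 ≤ (1-β) * (qf w d x + (1/((m:ℝ)+1)) * ∑ k, (x k)^2)) ∧
      ((n:ℝ) - l - β*n ≤ ∑ i, (d i - lev w d i)) := by
    intro m
    exact stage hβ0 hβ1 w (ε := 1/((m:ℝ)+1)) (by positivity)
  choose D hD1 hD2 hD3 using hstage
  have hDbox : ∀ m, D m ∈ Set.Icc (0 : Fin n → ℝ) 1 :=
    fun m => Set.mem_Icc.mpr ⟨fun i => (hD1 m i).1, fun i => (hD1 m i).2⟩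
  obtain ⟨dbar, hdbar_mem, φ, hφ, hconv⟩ := isCompact_Icc.tendsto_subseq hDbox
  have hconv_i : ∀ i, Filter.Tendsto (fun m => D (φ m) i) Filter.atTop (𝓝 (dbar i)) := by
    intro i
    have := ((continuous_apply i).tendsto dbar).comp hconv
    exact this
  have hd01 : ∀ i, 0 ≤ dbar i ∧ dbar i ≤ 1 := by
    intro i
    have h := Set.mem_Icc.mp hdbar_mem
    exact ⟨h.1 i, h.2 i⟩
  have hd0 : ∀ i, 0 ≤ dbar i := fun i => (hd01 i).1
  have hεto0 : Filter.Tendsto (fun m => 1/((φ m : ℝ)+1)) Filter.atTop (𝓝 0) := by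
    have h1 : Filter.Tendsto (fun m : ℕ => 1/((m:ℝ)+1)) Filter.atTop (𝓝 0) :=
      tendsto_one_div_add_atTop_nhds_zero_nat
    exact h1.comp hφ.tendsto_atTop
  have hqconv : ∀ x, Filter.Tendsto (fun m => qf w (D (φ m)) x) Filter.atTop
      (𝓝 (qf w dbar x)) := by
    intro x
    unfold qf
    exact tendsto_finset_sum _ fun j _ => (hconv_i j).mul_const _
  have hfeas : ∀ i x, dbar i * (cx w x i)^2 ≤ (1-β) * qf w dbar x := by
    intro i x
    have hL : Filter.Tendsto (fun m => D (φ m) i * (cx w x i)^2) Filter.atTop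
        (𝓝 (dbar i * (cx w x i)^2)) := (hconv_i i).mul_const _
    have hR : Filter.Tendsto
        (fun m => (1-β) * (qf w (D (φ m)) x + (1/((φ m:ℝ)+1)) * ∑ k, (x k)^2))
        Filter.atTop (𝓝 ((1-β) * (qf w dbar x + 0 * ∑ k, (x k)^2))) :=
      Filter.Tendsto.const_mul _ ((hqconv x).add (hεto0.mul_const _))
    have hle := le_of_tendsto_of_tendsto' hL hR (fun m => hD2 (φ m) i x)
    simpa using hle
  refine ⟨dbar, hd01, hfeas, ?_⟩
  have hxrep : ∀ i : Fin n, ∃ x : Fin l → ℝ,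
      ∑ k, x k • yv w dbar k = pvL w dbar (zv dbar i) :=
    fun i => (Submodule.mem_span_range_iff_exists_fun ℝ).mp (pvL_mem w dbar (zv dbar i))
  choose X hX using hxrep
  set s : ℕ → Fin n → ℝ := fun m i =>
    if ‖pvL w dbar (zv dbar i)‖^2 = 0 then 0
    else (D (φ m) i * cx w (X i) i)^2 / qf w (D (φ m)) (X i) with hs
  have hsmi : ∀ m i, s m i = if ‖pvL w dbar (zv dbar i)‖^2 = 0 then 0
      else (D (φ m) i * cx w (X i) i)^2 / qf w (D (φ m)) (X i) := by
    intro m i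
    rw [hs]
  have hs_le : ∀ m i, s m i ≤ lev w (D (φ m)) i := by
    intro m i
    rw [hsmi m i]
    have hlevm0 : (0:ℝ) ≤ lev w (D (φ m)) i := sq_nonneg _
    by_cases h0 : ‖pvL w dbar (zv dbar i)‖^2 = 0
    · rw [if_pos h0]
      exact hlevm0
    · rw [if_neg h0]
      by_cases hq0 : qf w (D (φ m)) (X i) = 0
      · rw [hq0, div_zero]
        exact hlevm0
      · have hd0m : ∀ j, 0 ≤ D (φ m) j := fun j => (hD1 (φ m) j).1
        have hqpos : 0 < qf w (D (φ m)) (X i) :=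
          lt_of_le_of_ne (qf_nonneg w hd0m _) (Ne.symm hq0)
        rw [div_le_iff₀ hqpos]
        have hvmem : (∑ k, X i k • yv w (D (φ m)) k) ∈ Vsp w (D (φ m)) :=
          Submodule.sum_mem _ fun k _ =>
            Submodule.smul_mem _ _ (Submodule.subset_span (Set.mem_range_self k))
        have hCS := inner_sq_le_lev w (D (φ m)) (zv (D (φ m)) i) _ hvmem
        rw [inner_zv_comb w (D (φ m)) hd0m i (X i), norm_comb_sq w (D (φ m)) hd0m (X i)] at hCS
        exact hCS
  have hs_lim : ∀ i, Filter.Tendsto (fun m => s m i) Filter.atTop (𝓝 (lev w dbar i)) := by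
    intro i
    have hrw : (fun m => s m i) = fun m => (if ‖pvL w dbar (zv dbar i)‖^2 = 0 then 0
        else (D (φ m) i * cx w (X i) i)^2 / qf w (D (φ m)) (X i)) := by
      funext m
      exact hsmi m i
    rw [hrw]
    by_cases h0 : ‖pvL w dbar (zv dbar i)‖^2 = 0
    · simp only [h0, if_true]
      have hzero : lev w dbar i = 0 := h0
      rw [hzero]
      exact tendsto_const_nhds
    · simp only [h0, if_false]
      have hnum : Filter.Tendsto (fun m => (D (φ m) i * cx w (X i) i)^2) Filter.atTop
          (𝓝 ((dbar i * cx w (X i) i)^2)) := ((hconv_i i).mul_const _).pow 2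
      have hden := hqconv (X i)
      have hqbar : qf w dbar (X i) = ‖pvL w dbar (zv dbar i)‖^2 := by
        rw [← norm_comb_sq w dbar hd0 (X i), hX i]
      have hden_ne : qf w dbar (X i) ≠ 0 := by rw [hqbar]; exact h0
      have hdiv := hnum.div hden hden_ne
      have h1 : dbar i * cx w (X i) i = ‖pvL w dbar (zv dbar i)‖^2 := by
        rw [← inner_zv_comb w dbar hd0 i (X i), hX i]
        exact inner_zv_pvL w dbar (zv dbar i)
      have hid : (dbar i * cx w (X i) i)^2 / qf w dbar (X i) = lev w dbar i := by
        rw [h1, hqbar, sq, mul_div_assoc, div_self h0, mul_one]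
        rfl
      rw [hid] at hdiv
      exact hdiv
  have hseq : ∀ m, (n:ℝ) - l - β*n ≤ ∑ i, (D (φ m) i - s m i) := by
    intro m
    refine le_trans (hD3 (φ m)) (Finset.sum_le_sum fun i _ => ?_)
    have := hs_le m i
    linarith
  have hlim : Filter.Tendsto (fun m => ∑ i, (D (φ m) i - s m i)) Filter.atTop
      (𝓝 (∑ i, (dbar i - lev w dbar i))) :=
    tendsto_finset_sum _ fun i _ => (hconv_i i).sub (hs_lim i)
  exact ge_of_tendsto' hlim hseq

end UVC

/-- Theorem 5 (Universal Vector Colorings): for `0 ≤ δ < 1`, `β ∈ (0, 1-δ)` and any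
`ℓ = δn` linear constraints `w₁,…,w_ℓ ∈ ℝⁿ`, there exist vectors `u₁,…,uₙ` with
(i) `∑ᵢ wₖ(i)uᵢ = 0` for every `k`;
(ii) `‖∑ᵢ b(i)uᵢ‖² ≤ (1/β)∑ᵢ b(i)²‖uᵢ‖²` for every `b ∈ ℝⁿ`;
(iii) `‖uᵢ‖ ≤ 1` for all `i` and `∑ᵢ ‖uᵢ‖² ≥ (1-δ-β)n`. -/
theorem exists_universal_vector_coloring (n l : ℕ) (δ β : ℝ) (hδ0 : 0 ≤ δ)
    (hδ1 : δ < 1) (hβ : β ∈ Set.Ioo (0 : ℝ) (1 - δ)) (hl : (l : ℝ) = δ * n)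
    (w : Fin l → Fin n → ℝ) :
    ∃ u : Fin n → EuclideanSpace ℝ (Fin n),
      (∀ k, ∑ i, w k i • u i = 0) ∧
      (∀ b : Fin n → ℝ, ‖∑ i, b i • u i‖ ^ 2 ≤ (1 / β) * ∑ i, (b i) ^ 2 * ‖u i‖ ^ 2) ∧
      (∀ i, ‖u i‖ ≤ 1) ∧ (1 - δ - β) * n ≤ ∑ i, ‖u i‖ ^ 2 := by
  have hβ0 : 0 < β := hβ.1
  have hβ1 : β < 1 := by
    have := hβ.2
    linarith
  obtain ⟨d, hd01, hfeas, htr⟩ := UVC.exists_good_d (n := n) (l := l) hβ0 hβ1 w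
  have hB : (1-δ-β) * (n:ℝ) ≤ ∑ i, (d i - UVC.lev w d i) := by
    have harith : (1-δ-β)*(n:ℝ) = (n:ℝ) - l - β*n := by rw [hl]; ring
    linarith
  exact UVC.assemble hβ0 hβ1 w hd01 hfeas _ hB
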